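/- Let n = 6 and let I = I_2^{(1,6)} · I_2^{(3,6)} in S = K[x_1,…,x_6], where I_2^{(1,6)} and I_2^{(3,6)} are the ideals of 2×2 minors of the Hankel matrices on x_1,…,x_6 and x_3,…,x_6 respectively. Then I is strictly contained in the intersection I_2^{(3,6)} ∩ (I_2^{(1,6)})^{(2)} ∩ (I_1^{(2,6)})^{(3)} of the symbolic powers of its associated primes. -/

import Mathlib

open MvPolynomial

noncomputable section

/-- Total degree of an exponent vector. -/
def expDeg (u : ℕ →₀ ℕ) : ℕ := u.sum fun _ e => e

/-- Degree lexicographic order induced by `x_1 > x_2 > ⋯` :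
`DegLexLt u v` means the monomial with exponent `u` is strictly smaller than
the one with exponent `v`. -/
def DegLexLt (u v : ℕ →₀ ℕ) : Prop :=
  expDeg u < expDeg v ∨ (expDeg u = expDeg v ∧ toLex u < toLex v)

/-- `u` is the exponent vector of the (unique, strictly largest) leading term of `f`
with respect to degree lexicographic order. -/
def IsLeadMono {K : Type*} [CommRing K] (f : MvPolynomial ℕ K) (u : ℕ →₀ ℕ) : Prop :=
  u ∈ f.support ∧ ∀ v ∈ f.support, v ≠ u → DegLexLt v u

/-- The initial ideal of `I` : the ideal generated by the leading monomials of
elements of `I`. -/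
def initialIdeal {K : Type*} [CommRing K] (I : Ideal (MvPolynomial ℕ K)) :
    Ideal (MvPolynomial ℕ K) :=
  Ideal.span {m | ∃ f ∈ I, ∃ u, IsLeadMono f u ∧ m = monomial u (1 : K)}

/-- `a 1, …, a r` is a chain (1-indexed strictly increasing sequence with gaps ≥ 2). -/
def IsChainOn (r : ℕ) (a : ℕ → ℕ) : Prop := ∀ i, 1 ≤ i → i < r → a i + 1 < a (i + 1)

/-- Exponent vector of the monomial `x_{a 1} ⋯ x_{a r}`. -/
def chainExp (r : ℕ) (a : ℕ → ℕ) : ℕ →₀ ℕ := ∑ i ∈ Finset.Icc 1 r, Finsupp.single (a i) 1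

/-- The maximal minor of a Hankel matrix whose main diagonal is `x_{a 1}, …, x_{a r}`;
its (i,j) entry (0-indexed) is `x_{a (j+1) + i - j}`. -/
def minorOfChain (K : Type*) [CommRing K] (r : ℕ) (a : ℕ → ℕ) : MvPolynomial ℕ K :=
  (Matrix.of fun i j : Fin r =>
    (X (a ((j : ℕ) + 1) + (i : ℕ) - (j : ℕ)) : MvPolynomial ℕ K)).det

/-- The chain `a` is the diagonal chain of a maximal minor of the Hankel matrix with
`r` rows built from the variables `x_lo, …, x_hi`. -/
def FitsHankel (lo hi r : ℕ) (a : ℕ → ℕ) : Prop :=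
  IsChainOn r a ∧ ∀ j, 1 ≤ j → j ≤ r → lo + (j - 1) ≤ a j ∧ a j + (r - j) ≤ hi

/-- The ideal of maximal minors of the Hankel matrix with `r` rows on `x_lo, …, x_hi`. -/
def hankelIdeal (K : Type*) [CommRing K] (lo hi r : ℕ) : Ideal (MvPolynomial ℕ K) :=
  Ideal.span {f | ∃ a : ℕ → ℕ, FitsHankel lo hi r a ∧ f = minorOfChain K r a}

/-- `Interval(a) = ⋃_{2 ≤ i ≤ r} {a_i - 1, a_i}`. -/
def IntervalOf (r : ℕ) (a : ℕ → ℕ) : Set ℕ :=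
  {x | ∃ i, 2 ≤ i ∧ i ≤ r ∧ (x = a i - 1 ∨ x = a i)}

/- Control functions with Δ = 0. -/
def omegaD (r s : ℕ) : ℕ := if r < s then r else s - 1
def omegaC (r s : ℕ) : ℕ := if r ≤ s then r else s
def omegaAD (r s : ℕ) : ℕ := if r ≤ s then r - 1 else s

/-- The three standard-form conditions for a pair of chains, with bounds
`d = Ω_d`, `c = Ω_c`, `ad = Ω_ad`. -/
def StdPairCond (d c ad r s : ℕ) (a b : ℕ → ℕ) : Prop :=
  ((∀ i, 1 ≤ i → i ≤ d → a i ≤ b (i + 1)) ∨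
    (∃ h, 1 ≤ h ∧ h ≤ d ∧ b (h + 1) < a h ∧
      ∀ i, h ≤ i → i ≤ d → a i ∈ IntervalOf s b)) ∧
  ((∀ i, 1 ≤ i → i ≤ c → a i ≤ b i) ∨
    (∃ h, 1 ≤ h ∧ h ≤ c ∧ b h < a h ∧
      ∀ i, h ≤ i → i ≤ c → a i ∈ IntervalOf s b)) ∧
  ((∀ i, 1 ≤ i → i ≤ ad → b i ≤ a (i + 1)) ∨
    (∃ h, 1 ≤ h ∧ h ≤ ad ∧ a (h + 1) < b h ∧
      ∀ i, h ≤ i → i ≤ ad → b i ∈ IntervalOf r a))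

/-- Standard form for a pair of (unlabeled) chains, with Δ = 0. -/
def StdPair (r s : ℕ) (a b : ℕ → ℕ) : Prop :=
  StdPairCond (omegaD r s) (omegaC r s) (omegaAD r s) r s a b

def HasDiagRel (r s : ℕ) (a b : ℕ → ℕ) : Prop :=
  ∃ h k, 1 ≤ h ∧ h ≤ omegaD r s ∧ h + 1 ≤ k ∧ k ≤ s ∧ b k < a h ∧ a h ∉ IntervalOf s b

def HasColRel (r s : ℕ) (a b : ℕ → ℕ) : Prop :=
  ∃ h, 1 ≤ h ∧ h ≤ omegaC r s ∧ b h < a h ∧ a h ∉ IntervalOf s b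

def HasADRel (r s : ℕ) (a b : ℕ → ℕ) : Prop :=
  ∃ h k, 1 ≤ h ∧ h ≤ omegaAD r s ∧ h + 1 ≤ k ∧ k ≤ r ∧ a k < b h ∧ b h ∉ IntervalOf r a

/-- A diagonal relation move (swap of a block of entries), with Ω_d bound `d`. -/
def DiagMoveP (d s : ℕ) (a b a' b' : ℕ → ℕ) : Prop :=
  ∃ h k v, 1 ≤ h ∧ h ≤ d ∧ h + 1 ≤ k ∧ k ≤ s ∧ b k < a h ∧ a h ∉ IntervalOf s b ∧
    v ≤ h - 1 ∧ (∀ i, i ≤ v → b (k - i) < a (h - i)) ∧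
    (v ≠ h - 1 → a (h - v - 1) ≤ b (k - v - 1)) ∧
    (∀ i, a' i = if h - v ≤ i ∧ i ≤ h then b (i + k - h) else a i) ∧
    (∀ i, b' i = if k - v ≤ i ∧ i ≤ k then a (i + h - k) else b i)

/-- A column-wise relation move, with Ω_c bound `c`. -/
def ColMoveP (c s : ℕ) (a b a' b' : ℕ → ℕ) : Prop :=
  ∃ h v, 1 ≤ h ∧ h ≤ c ∧ b h < a h ∧ a h ∉ IntervalOf s b ∧
    v ≤ h - 1 ∧ (∀ i, i ≤ v → b (h - i) < a (h - i)) ∧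
    (v ≠ h - 1 → a (h - v - 1) ≤ b (h - v - 1)) ∧
    (∀ i, a' i = if h - v ≤ i ∧ i ≤ h then b i else a i) ∧
    (∀ i, b' i = if h - v ≤ i ∧ i ≤ h then a i else b i)

/-- An anti-diagonal relation move, with Ω_ad bound `ad`. -/
def ADMoveP (ad r : ℕ) (a b a' b' : ℕ → ℕ) : Prop :=
  ∃ h k v, 1 ≤ h ∧ h ≤ ad ∧ h + 1 ≤ k ∧ k ≤ r ∧ a k < b h ∧ b h ∉ IntervalOf r a ∧
    v ≤ h - 1 ∧ (∀ i, i ≤ v → a (k - i) < b (h - i)) ∧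
    (v ≠ h - 1 → b (h - v - 1) ≤ a (k - v - 1)) ∧
    (∀ i, a' i = if k - v ≤ i ∧ i ≤ k then b (i + h - k) else a i) ∧
    (∀ i, b' i = if h - v ≤ i ∧ i ≤ h then a (i + k - h) else b i)

/-- A relation move on a pair of (unlabeled) chains (Δ = 0). -/
def Move (r s : ℕ) (a b a' b' : ℕ → ℕ) : Prop :=
  DiagMoveP (omegaD r s) s a b a' b' ∨ ColMoveP (omegaC r s) s a b a' b' ∨
    ADMoveP (omegaAD r s) r a b a' b'

/- Labels and labeled chains, for the family of close cuts. -/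
def IsLabel (n : ℕ) (σ : ℕ × ℕ) : Prop :=
  σ = (1, n) ∨ σ = (1, n - 1) ∨ σ = (2, n) ∨ σ = (2, n - 1)

def LabeledChain (n : ℕ) (σ : ℕ × ℕ) (r : ℕ) (a : ℕ → ℕ) : Prop :=
  IsLabel n σ ∧ 1 ≤ r ∧ FitsHankel σ.1 σ.2 r a

/-- Order of labels: (1,n-1) > (1,n) > (2,n-1) > (2,n). -/
def labelRank (n : ℕ) (σ : ℕ × ℕ) : ℕ :=
  if σ = (1, n - 1) then 3 else if σ = (1, n) then 2 else if σ = (2, n - 1) then 1 else 0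

/-- `(σ,a) ≥_c (γ,b)`. -/
def GeC (n : ℕ) (σ : ℕ × ℕ) (r : ℕ) (a : ℕ → ℕ) (γ : ℕ × ℕ) (s : ℕ) (b : ℕ → ℕ) : Prop :=
  labelRank n γ < labelRank n σ ∨
    (σ = γ ∧ (chainExp s b = chainExp r a ∨ DegLexLt (chainExp s b) (chainExp r a)))

/-- The function Δ for a pair of labeled chains. -/
def delta (n : ℕ) (σ γ : ℕ × ℕ) (r s : ℕ) (a b : ℕ → ℕ) : ℕ :=
  if (r ≤ s ∧ a r = n ∧ γ.2 = n - 1) ∨ (s < r ∧ b s = n ∧ σ.2 = n - 1) then 1 else 0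

def omegaD' (Δ r s : ℕ) : ℕ := if r < s then r - Δ else s - 1
def omegaC' (Δ r s : ℕ) : ℕ := if r ≤ s then r - Δ else s
def omegaAD' (Δ r s : ℕ) : ℕ := if r ≤ s then r - 1 else s - Δ

/-- Standard form for a pair of labeled chains `(σ,a) ≥_c (γ,b)`. -/
def StdPairL (n : ℕ) (σ γ : ℕ × ℕ) (r s : ℕ) (a b : ℕ → ℕ) : Prop :=
  StdPairCond (omegaD' (delta n σ γ r s a b) r s) (omegaC' (delta n σ γ r s a b) r s)
    (omegaAD' (delta n σ γ r s a b) r s) r s a b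

/-- A relation move on a pair of labeled chains (Δ as prescribed by the labels). -/
def MoveL (n : ℕ) (σ γ : ℕ × ℕ) (r s : ℕ) (a b a' b' : ℕ → ℕ) : Prop :=
  DiagMoveP (omegaD' (delta n σ γ r s a b) r s) s a b a' b' ∨
  ColMoveP (omegaC' (delta n σ γ r s a b) r s) s a b a' b' ∨
  ADMoveP (omegaAD' (delta n σ γ r s a b) r s) r a b a' b'

/-- A tabel with `l` rows: row `i` (1 ≤ i ≤ l) is the labeled chain
`(lab i, ent i)` of length `len i`, and the rows are ordered decreasingly by `≥_c`. -/
def IsTabel (n l : ℕ) (lab : ℕ → ℕ × ℕ) (len : ℕ → ℕ) (ent : ℕ → ℕ → ℕ) : Prop :=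
  (∀ i, 1 ≤ i → i ≤ l → LabeledChain n (lab i) (len i) (ent i)) ∧
  (∀ i, 1 ≤ i → i < l →
    GeC n (lab i) (len i) (ent i) (lab (i + 1)) (len (i + 1)) (ent (i + 1)))

/-- A tabel is a standard form: the standard-form conditions hold for each
pair of rows `i < j`. -/
def StdTabel (n l : ℕ) (lab : ℕ → ℕ × ℕ) (len : ℕ → ℕ) (ent : ℕ → ℕ → ℕ) : Prop :=
  ∀ i j, 1 ≤ i → i < j → j ≤ l →
    StdPairL n (lab i) (lab j) (len i) (len j) (ent i) (ent j)

/-- Standardness of a quadratic factor `x_i · z_{σ,a}` (condition (ii) of the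
standard-monomial construction). -/
def XZStd (i : ℕ) (σ : ℕ × ℕ) (r : ℕ) (a : ℕ → ℕ) : Prop :=
  i ≤ a 1 ∨ (a 1 < i ∧ (σ.2 < i ∨ i ∈ IntervalOf r a))


/-! ### Auxiliary lemmas for Statement 19 -/

lemma minor2_eq {K : Type*} [CommRing K] (a : ℕ → ℕ) :
    minorOfChain K 2 a = X (a 1) * X (a 2) - X (a 2 - 1) * X (a 1 + 1) := by
  simp [minorOfChain, Matrix.det_fin_two, Matrix.of_apply]

lemma minor1_eq {K : Type*} [CommRing K] (a : ℕ → ℕ) :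
    minorOfChain K 1 a = X (a 1) := by
  simp [minorOfChain, Matrix.det_fin_one, Matrix.of_apply]

lemma mem_hankel2 {K : Type*} [CommRing K] {lo a b : ℕ} (h1 : lo ≤ a) (h2 : a + 2 ≤ b)
    (h3 : b ≤ 6) :
    (X a * X b - X (b - 1) * X (a + 1) : MvPolynomial ℕ K) ∈ hankelIdeal K lo 6 2 := by
  apply Ideal.subset_span
  refine ⟨fun i => if i ≤ 1 then a else b, ⟨?_, ?_⟩, ?_⟩
  · intro i hi1 hi2
    have : i = 1 := by omega
    subst this; simp; omega
  · intro j hj1 hj2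
    interval_cases j <;> simp <;> omega
  · rw [minor2_eq]; norm_num

lemma mem_hankel1 {K : Type*} [CommRing K] {a : ℕ} (h1 : 2 ≤ a) (h2 : a ≤ 6) :
    (X a : MvPolynomial ℕ K) ∈ hankelIdeal K 2 6 1 := by
  apply Ideal.subset_span
  refine ⟨fun _ => a, ⟨?_, ?_⟩, ?_⟩
  · intro i hi1 hi2; omega
  · intro j hj1 hj2
    have : j = 1 := by omega
    subst this; simp; omega
  · rw [minor1_eq]

lemma J_le_P {K : Type*} [CommRing K] : hankelIdeal K 3 6 2 ≤ hankelIdeal K 1 6 2 := by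
  apply Ideal.span_mono
  rintro g ⟨a, ⟨hc, hb⟩, rfl⟩
  exact ⟨a, ⟨hc, fun j hj1 hj2 =>
    ⟨by have := (hb j hj1 hj2).1; omega, (hb j hj1 hj2).2⟩⟩, rfl⟩

lemma P_le_m {K : Type*} [CommRing K] : hankelIdeal K 1 6 2 ≤ hankelIdeal K 2 6 1 := by
  rw [hankelIdeal, Ideal.span_le]
  rintro g ⟨a, ⟨hc, hb⟩, rfl⟩
  have h1 := hb 1 (by norm_num) (by norm_num)
  have h2 := hb 2 (by norm_num) (by norm_num)
  have hch := hc 1 (by norm_num) (by norm_num)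
  norm_num at hch
  rw [SetLike.mem_coe, minor2_eq]
  exact Ideal.sub_mem _
    (Ideal.mul_mem_left _ _ (mem_hankel1 (by omega) (by omega)))
    (Ideal.mul_mem_right _ _ (mem_hankel1 (by omega) (by omega)))

lemma J_le_m2 {K : Type*} [CommRing K] :
    hankelIdeal K 3 6 2 ≤ hankelIdeal K 2 6 1 ^ 2 := by
  rw [hankelIdeal, Ideal.span_le]
  rintro g ⟨a, ⟨hc, hb⟩, rfl⟩
  have h1 := hb 1 (by norm_num) (by norm_num)
  have h2 := hb 2 (by norm_num) (by norm_num)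
  have hch := hc 1 (by norm_num) (by norm_num)
  norm_num at hch
  rw [SetLike.mem_coe, minor2_eq, pow_two]
  exact Ideal.sub_mem _
    (Ideal.mul_mem_mul (mem_hankel1 (by omega) (by omega))
      (mem_hankel1 (by omega) (by omega)))
    (Ideal.mul_mem_mul (mem_hankel1 (by omega) (by omega))
      (mem_hankel1 (by omega) (by omega)))

lemma P_le_ker {K : Type*} [CommRing K] :
    hankelIdeal K 1 6 2 ≤ RingHom.ker (eval (fun _ => (1 : K))) := by
  rw [hankelIdeal, Ideal.span_le]
  rintro g ⟨a, _, rfl⟩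
  rw [SetLike.mem_coe, RingHom.mem_ker, minor2_eq]
  simp

lemma m_le_ker {K : Type*} [CommRing K] :
    hankelIdeal K 2 6 1 ≤ RingHom.ker (eval (fun i => if i < 2 then (1 : K) else 0)) := by
  rw [hankelIdeal, Ideal.span_le]
  rintro g ⟨a, ⟨_, hb⟩, rfl⟩
  have h1 := hb 1 (by norm_num) (by norm_num)
  rw [SetLike.mem_coe, RingHom.mem_ker, minor1_eq]
  simp only [eval_X]
  rw [if_neg (by omega)]

/-- The witness polynomial: the determinant of the `3 × 3` Hankel matrix on
`x_2, …, x_6`. -/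
def witnessF (K : Type*) [CommRing K] : MvPolynomial ℕ K :=
  X 2 * X 4 * X 6 - X 2 * X 5 * X 5 - X 3 * X 3 * X 6 + 2 * (X 3 * X 4 * X 5) -
    X 4 * X 4 * X 4

/-- for `n = 6`, the product `I = I_2^{(1,6)} · I_2^{(3,6)}` is strictly
contained in `I_2^{(3,6)} ∩ (I_2^{(1,6)})^{(2)} ∩ (I_1^{(2,6)})^{(3)}`, where symbolic
powers are the saturations `P^{(k)} = {f | ∃ s ∉ P, s·f ∈ P^k}`. -/
theorem stmt19 {K : Type*} [Field K] :
    (∀ f ∈ hankelIdeal K 1 6 2 * hankelIdeal K 3 6 2,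
      f ∈ hankelIdeal K 3 6 2 ∧
        (∃ s ∉ hankelIdeal K 1 6 2, s * f ∈ hankelIdeal K 1 6 2 ^ 2) ∧
        (∃ s ∉ hankelIdeal K 2 6 1, s * f ∈ hankelIdeal K 2 6 1 ^ 3)) ∧
    (∃ f : MvPolynomial ℕ K,
      (f ∈ hankelIdeal K 3 6 2 ∧
        (∃ s ∉ hankelIdeal K 1 6 2, s * f ∈ hankelIdeal K 1 6 2 ^ 2) ∧
        (∃ s ∉ hankelIdeal K 2 6 1, s * f ∈ hankelIdeal K 2 6 1 ^ 3)) ∧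
      f ∉ hankelIdeal K 1 6 2 * hankelIdeal K 3 6 2) := by
  constructor
  · intro f hf
    refine ⟨Ideal.mul_le_right hf, ⟨1, ?_, ?_⟩, ⟨1, ?_, ?_⟩⟩
    · intro h
      have := P_le_ker h
      rw [RingHom.mem_ker] at this
      simp at this
    · rw [one_mul, pow_two]
      exact Ideal.mul_mono_right J_le_P hf
    · intro h
      have := m_le_ker h
      rw [RingHom.mem_ker] at this
      simp at this
    · rw [one_mul]
      have hle : hankelIdeal K 1 6 2 * hankelIdeal K 3 6 2 ≤ hankelIdeal K 2 6 1 ^ 3 := by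
        calc hankelIdeal K 1 6 2 * hankelIdeal K 3 6 2
            ≤ hankelIdeal K 2 6 1 * hankelIdeal K 2 6 1 ^ 2 := Ideal.mul_mono P_le_m J_le_m2
          _ = hankelIdeal K 2 6 1 ^ 3 := by ring
      exact hle hf
  · refine ⟨witnessF K, ⟨?_, ⟨X 2, ?_, ?_⟩, ⟨1, ?_, ?_⟩⟩, ?_⟩
    · -- f ∈ I_2^{(3,6)}
      have hid : witnessF K = X 2 * (X 4 * X 6 - X 5 * X 5) - X 3 * (X 3 * X 6 - X 5 * X 4)
          + X 4 * (X 3 * X 5 - X 4 * X 4) := by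
        simp only [witnessF]; ring
      rw [hid]
      refine Ideal.add_mem _ (Ideal.sub_mem _ ?_ ?_) ?_ <;>
        exact Ideal.mul_mem_left _ _ (mem_hankel2 (by norm_num) (by norm_num) (by norm_num))
    · -- X 2 ∉ P
      intro h
      have := P_le_ker h
      rw [RingHom.mem_ker] at this
      simp at this
    · -- X 2 * f ∈ P^2
      have hid : X 2 * witnessF K =
          (X 1 * X 4 - X 3 * X 2) * (X 3 * X 6 - X 5 * X 4)
          - (X 1 * X 3 - X 2 * X 2) * (X 4 * X 6 - X 5 * X 5)
          - (X 1 * X 5 - X 4 * X 2) * (X 3 * X 5 - X 4 * X 4) := by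
        simp only [witnessF]; ring
      rw [hid, pow_two]
      refine Ideal.sub_mem _ (Ideal.sub_mem _ ?_ ?_) ?_ <;>
        exact Ideal.mul_mem_mul
          (mem_hankel2 (by norm_num) (by norm_num) (by norm_num))
          (mem_hankel2 (by norm_num) (by norm_num) (by norm_num))
    · -- 1 ∉ m
      intro h
      have := m_le_ker h
      rw [RingHom.mem_ker] at this
      simp at this
    · -- f ∈ m^3
      rw [one_mul]
      have hid : witnessF K = (X 2 * X 4) * X 6 - (X 2 * X 5) * X 5 - (X 3 * X 3) * X 6
          + (X 3 * X 4) * X 5 + (X 3 * X 4) * X 5 - (X 4 * X 4) * X 4 := by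
        simp only [witnessF]; ring
      rw [hid, show (3 : ℕ) = 2 + 1 from rfl, pow_succ, pow_two]
      refine Ideal.sub_mem _ (Ideal.add_mem _ (Ideal.add_mem _ (Ideal.sub_mem _
        (Ideal.sub_mem _ ?_ ?_) ?_) ?_) ?_) ?_ <;>
        exact Ideal.mul_mem_mul
          (Ideal.mul_mem_mul (mem_hankel1 (by norm_num) (by norm_num))
            (mem_hankel1 (by norm_num) (by norm_num)))
          (mem_hankel1 (by norm_num) (by norm_num))
    · -- f ∉ P * J
      intro hf
      set v : ℕ → K := fun i => if i = 2 then 1 else if i = 4 then 1 else if i = 6 then 2 else 0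
        with hv
      set w : ℕ → Polynomial K := fun i => Polynomial.C (v i) * Polynomial.X with hw
      have key : ∀ lo : ℕ,
          hankelIdeal K lo 6 2 ≤
            Ideal.comap (aeval w : MvPolynomial ℕ K →ₐ[K] Polynomial K).toRingHom
              (Ideal.span {(Polynomial.X : Polynomial K) ^ 2}) := by
        intro lo
        rw [hankelIdeal, Ideal.span_le]
        rintro g ⟨a, _, rfl⟩
        rw [SetLike.mem_coe, Ideal.mem_comap, minor2_eq]
        rw [Ideal.mem_span_singleton]
        refine ⟨Polynomial.C (v (a 1) * v (a 2) - v (a 2 - 1) * v (a 1 + 1)), ?_⟩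
        simp only [AlgHom.toRingHom_eq_coe, RingHom.coe_coe, map_sub, map_mul, aeval_X, hw,
          map_mul]
        ring
      have hmul : hankelIdeal K 1 6 2 * hankelIdeal K 3 6 2 ≤
          Ideal.comap (aeval w : MvPolynomial ℕ K →ₐ[K] Polynomial K).toRingHom
            (Ideal.span {(Polynomial.X : Polynomial K) ^ 4}) := by
        rw [Ideal.mul_le]
        intro r hr s hs
        rw [Ideal.mem_comap, map_mul]
        have h1 := key 1 hr
        have h2 := key 3 hs
        rw [Ideal.mem_comap] at h1 h2
        have := Ideal.mul_mem_mul h1 h2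
        rwa [Ideal.span_singleton_mul_span_singleton, ← pow_add] at this
      have h4 := hmul hf
      rw [Ideal.mem_comap] at h4
      have hwf : (aeval w : MvPolynomial ℕ K →ₐ[K] Polynomial K).toRingHom (witnessF K)
          = Polynomial.X ^ 3 := by
        simp only [AlgHom.toRingHom_eq_coe, RingHom.coe_coe, witnessF, map_sub, map_add,
          map_mul, aeval_X, map_ofNat, hw, hv]
        norm_num [map_ofNat]
        ring
      rw [hwf, Ideal.mem_span_singleton] at h4
      have := (Polynomial.X_pow_dvd_iff.mp h4) 3 (by norm_num)
      rw [Polynomial.coeff_X_pow] at this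
      simp at this


end
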